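/- Let G be a group, H ≤ K ≤ G subgroups, and A a nonempty finite subset of G. Then the number of right cosets of H inside K meeting A·A⁻¹ ∩ K is at least |π_{G/H}(A)| / |π_{G/K}(A)|, where π_{G/H}(A) denotes the set of right cosets of H in G meeting A. -/

import Mathlib

open Pointwise

theorem stmt_6 {G : Type*} [Group G] [DecidableEq G] (H K : Subgroup G) (hHK : H ≤ K)
    [DecidablePred (· ∈ K)]
    [DecidableEq (Quotient (QuotientGroup.rightRel H))]
    [DecidableEq (Quotient (QuotientGroup.rightRel K))]
    (A : Finset G) (hA : A.Nonempty) :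
    ((A.image fun a => Quotient.mk (QuotientGroup.rightRel H) a).card : ℝ)
        / ((A.image fun a => Quotient.mk (QuotientGroup.rightRel K) a).card : ℝ)
      ≤ (((((A * A⁻¹).filter (· ∈ K))).image
          fun a => Quotient.mk (QuotientGroup.rightRel H) a).card : ℝ) := by
  set fH := fun a : G => Quotient.mk (QuotientGroup.rightRel H) a with hfH
  set fK := fun a : G => Quotient.mk (QuotientGroup.rightRel K) a with hfK
  set T := ((A * A⁻¹).filter (· ∈ K)).image fH with hT
  -- the map collapsing H-cosets to K-cosets
  have hwd : ∀ a b : G, (QuotientGroup.rightRel H).r a b → (QuotientGroup.rightRel K).r a b := by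
    intro a b h
    rw [QuotientGroup.rightRel_apply] at h ⊢
    exact hHK h
  let φ : Quotient (QuotientGroup.rightRel H) → Quotient (QuotientGroup.rightRel K) :=
    Quotient.map' id hwd
  have hφ : ∀ a : G, φ (fH a) = fK a := fun a => rfl
  have himg : (A.image fH).image φ = A.image fK := by
    rw [Finset.image_image]
    exact Finset.image_congr (fun a _ => hφ a)
  have key : (A.image fH).card ≤ T.card * (A.image fK).card := by
    rw [← himg]
    apply Finset.card_le_mul_card_image
    intro b hb
    obtain ⟨q0, hq0, hq0b⟩ := Finset.mem_image.mp hb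
    obtain ⟨y₀, hy₀A, hy₀⟩ := Finset.mem_image.mp hq0
    -- injection from the fiber into T : q ↦ q * y₀⁻¹
    have hwd2 : ∀ a b : G, (QuotientGroup.rightRel H).r a b →
        (QuotientGroup.rightRel H).r (a * y₀⁻¹) (b * y₀⁻¹) := by
      intro a b h
      rw [QuotientGroup.rightRel_apply] at h ⊢
      simpa [mul_assoc] using h
    let ψ : Quotient (QuotientGroup.rightRel H) → Quotient (QuotientGroup.rightRel H) :=
      Quotient.map' (· * y₀⁻¹) hwd2
    apply Finset.card_le_card_of_injOn ψ
    · intro q hq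
      rw [Finset.mem_coe, Finset.mem_filter] at hq
      obtain ⟨x, hxA, hx⟩ := Finset.mem_image.mp hq.1
      have hKx : fK x = fK y₀ := by
        rw [← hφ, ← hφ, hx, hy₀, hq.2, hq0b]
      have hxy : x * y₀⁻¹ ∈ K := by
        have := Quotient.eq''.mp hKx
        rw [QuotientGroup.rightRel_apply] at this
        have := K.inv_mem this
        simpa using this
      have hmem : x * y₀⁻¹ ∈ (A * A⁻¹).filter (· ∈ K) := by
        rw [Finset.mem_filter]
        exact ⟨Finset.mul_mem_mul hxA (Finset.inv_mem_inv hy₀A), hxy⟩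
      have : ψ q = fH (x * y₀⁻¹) := by rw [← hx]; rfl
      rw [this]
      exact Finset.mem_image_of_mem fH hmem
    · intro q hq q' hq' hqq'
      induction q using Quotient.inductionOn' with
      | h x =>
        induction q' using Quotient.inductionOn' with
        | h x' =>
          have h1 : ψ (Quotient.mk'' x) = fH (x * y₀⁻¹) := rfl
          have h2 : ψ (Quotient.mk'' x') = fH (x' * y₀⁻¹) := rfl
          rw [h1, h2] at hqq'
          have := Quotient.eq''.mp hqq'
          rw [QuotientGroup.rightRel_apply] at this
          have hH : x' * x⁻¹ ∈ H := by simpa [mul_assoc] using this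
          exact Quotient.sound' ((QuotientGroup.rightRel_apply).mpr hH)
  have hpos : 0 < ((A.image fK).card : ℝ) := by
    have : (A.image fK).Nonempty := hA.image fK
    exact_mod_cast Finset.card_pos.mpr this
  rw [div_le_iff₀ hpos]
  exact_mod_cast key
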